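/- The number of permutations on D_{k,l} equals Σ_{i=0}^{k} (C(k,i)·(k−i)!)^l. -/

import Mathlib

open Finset

namespace Stmt8

variable {k l : ℕ}

/-- The permutation function determined by data `(S, e)`. -/
def psiFun (S : ZMod l → Finset (Fin k))
    (e : ∀ j : ZMod l, {x // x ∈ S j} ≃ {x // x ∈ S (j + 1)}) :
    Fin k × ZMod l → Fin k × ZMod l :=
  fun v => if h : v.1 ∈ S v.2 then (((e v.2) ⟨v.1, h⟩ : Fin k), v.2 + 1) else v

lemma psiFun_inj (S : ZMod l → Finset (Fin k))
    (e : ∀ j : ZMod l, {x // x ∈ S j} ≃ {x // x ∈ S (j + 1)}) :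
    Function.Injective (psiFun S e) := by
  rintro ⟨a, j⟩ ⟨b, m⟩ h
  simp only [psiFun] at h
  split_ifs at h with h1 h2 h2
  · rw [Prod.ext_iff] at h
    obtain ⟨h3, h4⟩ := h
    have hjm : j = m := by exact add_right_cancel h4
    subst hjm
    have : (⟨a, h1⟩ : {x // x ∈ S j}) = ⟨b, h2⟩ := (e j).injective (Subtype.ext h3)
    simpa using this
  · exfalso
    rw [Prod.ext_iff] at h
    obtain ⟨h3, h4⟩ := h
    simp only at h3 h4
    apply h2
    rw [← h4, ← h3]
    exact ((e j) ⟨a, h1⟩).2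
  · exfalso
    rw [Prod.ext_iff] at h
    obtain ⟨h3, h4⟩ := h
    simp only at h3 h4
    apply h1
    rw [h4, h3]
    exact ((e m) ⟨b, h2⟩).2
  · exact h

/-- The permutation determined by data `(S, e)`. -/
noncomputable def psi [NeZero l] (S : ZMod l → Finset (Fin k))
    (e : ∀ j : ZMod l, {x // x ∈ S j} ≃ {x // x ∈ S (j + 1)}) :
    Equiv.Perm (Fin k × ZMod l) :=
  Equiv.ofBijective (psiFun S e) ((Finite.injective_iff_bijective).mp (psiFun_inj S e))

lemma psi_apply [NeZero l] (S : ZMod l → Finset (Fin k))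
    (e : ∀ j : ZMod l, {x // x ∈ S j} ≃ {x // x ∈ S (j + 1)}) (v) :
    psi S e v = psiFun S e v := rfl

variable (k l) in
/-- The data type: a family of subsets indexed by `ZMod l` together with bijections between
consecutive ones. -/
abbrev Tt := Σ S : ZMod l → Finset (Fin k), ∀ j : ZMod l, {x // x ∈ S j} ≃ {x // x ∈ S (j + 1)}

noncomputable def Psi [NeZero l] : Tt k l →
    {σ : Equiv.Perm (Fin k × ZMod l) // ∀ v, σ v = v ∨ (σ v).2 = v.2 + 1} := fun p =>
  ⟨psi p.1 p.2, by
    intro v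
    by_cases h : v.1 ∈ p.1 v.2
    · right
      rw [psi_apply, psiFun, dif_pos h]
    · left
      rw [psi_apply, psiFun, dif_neg h]⟩

lemma Psi_injective [NeZero l] (hone : ∀ j : ZMod l, j + 1 ≠ j) :
    Function.Injective (Psi (k := k) (l := l)) := by
  rintro ⟨S, e⟩ ⟨S', e'⟩ h
  rw [Subtype.ext_iff] at h
  have h2 : psi S e = psi S' e' := h
  have happ : ∀ v, psiFun S e v = psiFun S' e' v := fun v => by
    rw [← psi_apply, ← psi_apply, h2]
  have hmem : ∀ (T : ZMod l → Finset (Fin k)) f (a : Fin k) (j : ZMod l),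
      a ∈ T j ↔ (psiFun T f (a, j)).2 ≠ j := by
    intro T f a j
    constructor
    · intro hm
      rw [psiFun, dif_pos hm]
      exact hone j
    · intro hm
      by_contra hc
      rw [psiFun, dif_neg hc] at hm
      exact hm rfl
  have hS : S = S' := by
    funext j
    ext a
    rw [hmem S e a j, hmem S' e' a j, happ (a, j)]
  subst hS
  have he : e = e' := by
    funext j
    apply Equiv.ext
    rintro ⟨a, ha⟩
    have := happ (a, j)
    rw [psiFun, psiFun, dif_pos ha, dif_pos ha] at this
    rw [Prod.ext_iff] at this
    exact Subtype.ext this.1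
  rw [he]

lemma Psi_surjective [NeZero l] :
    Function.Surjective (Psi (k := k) (l := l)) := by
  rintro ⟨σ, hσ⟩
  set S : ZMod l → Finset (Fin k) := fun j => univ.filter (fun a => σ (a, j) ≠ (a, j)) with hSdef
  have hmemS : ∀ (a : Fin k) (j : ZMod l), a ∈ S j ↔ σ (a, j) ≠ (a, j) := by
    intro a j; simp [hSdef]
  have hsnd : ∀ (a : Fin k) (j : ZMod l), a ∈ S j → σ (a, j) = ((σ (a, j)).1, j + 1) := by
    intro a j hm
    rcases hσ (a, j) with h | h
    · exact absurd h ((hmemS a j).mp hm)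
    · exact Prod.ext rfl h
  have hfwd : ∀ (a : Fin k) (j : ZMod l), a ∈ S j → (σ (a, j)).1 ∈ S (j + 1) := by
    intro a j hm
    rw [hmemS]
    intro hc
    have : σ (σ (a, j)) = σ (a, j) := by
      rw [hsnd a j hm] at hc ⊢
      exact hc
    exact (hmemS a j).mp hm (σ.injective this)
  have einj : ∀ j : ZMod l, Function.Injective
      (fun x : {x // x ∈ S j} => (⟨(σ (x.1, j)).1, hfwd x.1 j x.2⟩ : {x // x ∈ S (j + 1)})) := by
    intro j x y hxy
    rw [Subtype.ext_iff] at hxy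
    simp only at hxy
    have : σ (x.1, j) = σ (y.1, j) := by
      rw [hsnd x.1 j x.2, hsnd y.1 j y.2, hxy]
    have := σ.injective this
    exact Subtype.ext (congrArg Prod.fst this)
  have esurj : ∀ j : ZMod l, Function.Surjective
      (fun x : {x // x ∈ S j} => (⟨(σ (x.1, j)).1, hfwd x.1 j x.2⟩ : {x // x ∈ S (j + 1)})) := by
    intro j
    rintro ⟨b, hb⟩
    set u := σ.symm (b, j + 1) with hu
    have husig : σ u = (b, j + 1) := σ.apply_symm_apply _
    have hune : σ u ≠ u := by
      intro hc
      rw [husig] at hc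
      exact (hmemS b (j + 1)).mp hb (by rw [hc, husig]; exact hc)
    have hu2 : u.2 = j := by
      rcases hσ u with h | h
      · exact absurd h hune
      · have : u.2 + 1 = j + 1 := by rw [← h, husig]
        exact add_right_cancel this
    have hu' : u = (u.1, j) := by rw [← hu2]
    have huS : u.1 ∈ S j := by
      rw [hmemS]
      intro hc
      apply hune
      rw [hu'] at husig ⊢
      rw [hc]
    refine ⟨⟨u.1, huS⟩, ?_⟩
    apply Subtype.ext
    simp only
    rw [← hu', husig]
  refine ⟨⟨S, fun j => Equiv.ofBijective _ ⟨einj j, esurj j⟩⟩, ?_⟩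
  apply Subtype.ext
  apply Equiv.ext
  rintro ⟨a, j⟩
  show psiFun S _ (a, j) = σ (a, j)
  by_cases h : a ∈ S j
  · rw [psiFun, dif_pos h]
    exact (hsnd a j h).symm
  · rw [psiFun, dif_neg h]
    have : σ (a, j) = (a, j) := by
      by_contra hc
      exact h ((hmemS a j).mpr hc)
    exact this.symm

lemma cyc_const [NeZero l] (f : ZMod l → ℕ) (h : ∀ j, f (j + 1) = f j) (j : ZMod l) :
    f j = f 0 := by
  obtain ⟨n, rfl⟩ := ZMod.natCast_zmod_surjective j
  induction n with
  | zero => simp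
  | succ n ih =>
    have : ((n + 1 : ℕ) : ZMod l) = (n : ZMod l) + 1 := by push_cast; ring
    rw [this, h, ih]

lemma card_equiv_eq (α β : Type*) [Fintype α] [Fintype β] [DecidableEq α] [DecidableEq β] :
    Fintype.card (α ≃ β) =
      if Fintype.card α = Fintype.card β then (Fintype.card α).factorial else 0 := by
  split_ifs with h
  · exact Fintype.card_equiv (Fintype.equivOfCardEq h)
  · exact Fintype.card_eq_zero_iff.mpr ⟨fun e => h (Fintype.card_congr e)⟩

lemma card_Tt (hl : 2 ≤ l) :
    haveI : NeZero l := ⟨by omega⟩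
    Fintype.card (Tt k l) =
      ∑ i ∈ range (k + 1), (k.choose i * Nat.factorial i) ^ l := by
  haveI : NeZero l := ⟨by omega⟩
  have key : Fintype.card (Tt k l) = ∑ S : ZMod l → Finset (Fin k), ∏ j : ZMod l,
      if (S j).card = (S (j + 1)).card then ((S j).card).factorial else 0 := by
    simp only [Fintype.card_sigma, Fintype.card_pi, card_equiv_eq, Fintype.card_coe]
  rw [key]
  have step2 : ∀ S : ZMod l → Finset (Fin k),
      (∏ j : ZMod l,
        if (S j).card = (S (j + 1)).card then ((S j).card).factorial else 0) =
      ∑ i ∈ range (k + 1),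
        if (∀ j : ZMod l, (S j).card = i) then (Nat.factorial i) ^ l else 0 := by
    intro S
    by_cases hconst : ∀ j : ZMod l, (S j).card = (S 0).card
    · have hL : (∏ j : ZMod l,
          if (S j).card = (S (j + 1)).card then ((S j).card).factorial else 0) =
          ((S 0).card).factorial ^ l := by
        rw [Finset.prod_congr rfl fun j _ => by
          rw [hconst j, hconst (j + 1), if_pos rfl]]
        rw [Finset.prod_const, Finset.card_univ, ZMod.card]
      rw [hL]
      have hR : ∀ i, (∀ j : ZMod l, (S j).card = i) ↔ i = (S 0).card := by
        intro i
        constructor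
        · intro h; rw [← h 0]
        · intro h j; rw [hconst j, h]
      rw [Finset.sum_congr rfl fun i _ => if_congr (hR i) rfl rfl]
      rw [Finset.sum_ite_eq' (range (k + 1)) ((S 0).card)
        (fun i => (Nat.factorial i) ^ l)]
      rw [if_pos (mem_range.mpr (Nat.lt_succ_of_le (by
        simpa using Finset.card_le_univ (S 0))))]
    · have hex : ∃ j : ZMod l, (S j).card ≠ (S (j + 1)).card := by
        by_contra hc
        push_neg at hc
        exact hconst (cyc_const (fun j => (S j).card) (fun j => (hc j).symm))
      obtain ⟨j0, hj0⟩ := hex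
      rw [Finset.prod_eq_zero (Finset.mem_univ j0) (by rw [if_neg hj0])]
      rw [Finset.sum_congr rfl fun i _ => if_neg (fun hall => by
        exact hconst fun j => by rw [hall j, hall 0])]
      simp
  rw [Finset.sum_congr rfl fun S _ => step2 S]
  rw [Finset.sum_comm]
  refine Finset.sum_congr rfl fun i _ => ?_
  rw [← Finset.sum_filter]
  rw [Finset.sum_const, smul_eq_mul, mul_pow]
  congr 1
  rw [← Fintype.card_subtype]
  rw [Fintype.card_congr (Equiv.subtypePiEquivPi
    (p := fun (_ : ZMod l) (s : Finset (Fin k)) => s.card = i))]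
  rw [Fintype.card_pi]
  rw [Finset.prod_congr rfl fun j _ => (Fintype.card_finset_len i).trans
    (by rw [Fintype.card_fin])]
  rw [Finset.prod_const, Finset.card_univ, ZMod.card]

end Stmt8

/-- The number of permutations on the blowup `D_{k,l}` of a directed `l`-cycle with parts of
size `k` is `∑_{i=0}^k (C(k,i) (k-i)!)^l`. -/
theorem stmt_8 (k l : ℕ) (hk : 1 ≤ k) (hl : 2 ≤ l) :
    {σ : Equiv.Perm (Fin k × ZMod l) | ∀ v, σ v = v ∨ (σ v).2 = v.2 + 1}.ncard =
      ∑ i ∈ Finset.range (k + 1), (k.choose i * Nat.factorial (k - i)) ^ l := by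
  haveI : NeZero l := ⟨by omega⟩
  haveI : Fact (1 < l) := ⟨hl⟩
  have hone : ∀ j : ZMod l, j + 1 ≠ j := by
    intro j hj
    exact one_ne_zero (add_left_cancel (show j + 1 = j + 0 by rw [add_zero]; exact hj))
  have h1 : {σ : Equiv.Perm (Fin k × ZMod l) | ∀ v, σ v = v ∨ (σ v).2 = v.2 + 1}.ncard
      = Fintype.card (Stmt8.Tt k l) := by
    rw [← Nat.card_coe_set_eq, ← Nat.card_eq_fintype_card]
    exact (Nat.card_eq_of_bijective _ ⟨Stmt8.Psi_injective hone, Stmt8.Psi_surjective⟩).symm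
  rw [h1, Stmt8.card_Tt hl]
  have := Finset.sum_range_reflect (fun i => (k.choose i * Nat.factorial i) ^ l) (k + 1)
  rw [← this]
  refine Finset.sum_congr rfl fun i hi => ?_
  have hik : i ≤ k := Nat.lt_succ_iff.mp (Finset.mem_range.mp hi)
  have : k + 1 - 1 - i = k - i := by omega
  rw [this, Nat.choose_symm hik]
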